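/- Let k be an algebraically closed field of characteristic 2, V_4 the Klein four group, and V_1(α) the two-dimensional indecomposable kV_4-module with α ∈ k, α ≠ 0, 1, on which x = 1+g acts by the matrix [[0,1],[0,0]] and y = 1+h by [[0,α],[0,0]]. Then the canonical trace on End(V_1(α)) is an ambidextrous trace: for every kV_4-endomorphism f of V_1(α) ⊗ V_1(α), ⟨tr_L(f)⟩ = ⟨tr_R(f)⟩. -/

import Mathlib

set_option maxHeartbeats 1000000


open TensorProduct

/-- The right partial trace of `f : V ⊗ V → V ⊗ V`, computed with respect to the
basis `b`:  `tr_R(f)(v) = ∑ i (id ⊗ b.coord i)(f(v ⊗ b i))`. -/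
noncomputable def ptrR {k : Type*} [Field k] {V : Type*} [AddCommGroup V] [Module k V]
    {ι : Type*} [Fintype ι] (b : Module.Basis ι k V)
    (f : V ⊗[k] V →ₗ[k] V ⊗[k] V) : V →ₗ[k] V :=
  ∑ i : ι, (TensorProduct.rid k V).toLinearMap
      ∘ₗ (TensorProduct.map LinearMap.id (b.coord i))
      ∘ₗ f ∘ₗ ((TensorProduct.mk k V V).flip (b i))

/-- The left partial trace of `f : V ⊗ V → V ⊗ V`, computed with respect to the
basis `b`:  `tr_L(f)(v) = ∑ i (b.coord i ⊗ id)(f(b i ⊗ v))`. -/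
noncomputable def ptrL {k : Type*} [Field k] {V : Type*} [AddCommGroup V] [Module k V]
    {ι : Type*} [Fintype ι] (b : Module.Basis ι k V)
    (f : V ⊗[k] V →ₗ[k] V ⊗[k] V) : V →ₗ[k] V :=
  ∑ i : ι, (TensorProduct.lid k V).toLinearMap
      ∘ₗ (TensorProduct.map (b.coord i) LinearMap.id)
      ∘ₗ f ∘ₗ (TensorProduct.mk k V V (b i))

/-- The action of `x = 1 + g` on `V₁(α)`, i.e. the action of the generator `g`
of the Klein four group, given by the matrix `[[1,1],[0,1]]` (so that `x` acts
by `[[0,1],[0,0]]`). -/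
noncomputable def xAct (k : Type*) [Field k] : (Fin 2 → k) →ₗ[k] (Fin 2 → k) :=
  Matrix.toLin' !![1, 1; 0, 1]

/-- The action of the second generator `h` of the Klein four group on `V₁(α)`,
given by `[[1,α],[0,1]]` (so that `y = 1 + h` acts by `[[0,α],[0,0]]`). -/
noncomputable def yAct (k : Type*) [Field k] (α : k) : (Fin 2 → k) →ₗ[k] (Fin 2 → k) :=
  Matrix.toLin' !![1, α; 0, 1]

set_option synthInstance.maxHeartbeats 1000000 in
/-- For the two-dimensional indecomposable module `V₁(α)` (α ≠ 0, 1) over the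
Klein four group in characteristic 2, the canonical trace is ambidextrous: for
every module endomorphism `f` of `V₁(α) ⊗ V₁(α)` (i.e. every linear endomorphism
commuting with the diagonal actions of the two generators), `⟨tr_L f⟩ = ⟨tr_R f⟩`.
Since the socle of `V₁(α)` is spanned by `v₁` and `φ(v₁) = ⟨φ⟩⬝v₁` for every
endomorphism `φ`, this is expressed by evaluating the partial traces at `v₁`. -/
theorem stmt17 (k : Type*) [Field k] [IsAlgClosed k] [CharP k 2]
    (α : k) (hα0 : α ≠ 0) (hα1 : α ≠ 1) :
    ∀ f : (Fin 2 → k) ⊗[k] (Fin 2 → k) →ₗ[k] (Fin 2 → k) ⊗[k] (Fin 2 → k),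
      f ∘ₗ TensorProduct.map (xAct k) (xAct k)
          = TensorProduct.map (xAct k) (xAct k) ∘ₗ f →
      f ∘ₗ TensorProduct.map (yAct k α) (yAct k α)
          = TensorProduct.map (yAct k α) (yAct k α) ∘ₗ f →
      ptrL (Pi.basisFun k (Fin 2)) f (Pi.single 0 1)
        = ptrR (Pi.basisFun k (Fin 2)) f (Pi.single 0 1) := by
  intro f hx hy
  classical
  have hXm : LinearMap.toMatrix (Pi.basisFun k (Fin 2)) (Pi.basisFun k (Fin 2)) (xAct k)
      = !![1,1;0,1] := by
    rw [LinearMap.toMatrix_eq_toMatrix', xAct, LinearMap.toMatrix'_toLin']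
  have hYm : LinearMap.toMatrix (Pi.basisFun k (Fin 2)) (Pi.basisFun k (Fin 2)) (yAct k α)
      = !![1,α;0,1] := by
    rw [LinearMap.toMatrix_eq_toMatrix', yAct, LinearMap.toMatrix'_toLin']
  set BB := (Pi.basisFun k (Fin 2)).tensorProduct (Pi.basisFun k (Fin 2)) with hBBdef
  set M := LinearMap.toMatrix BB BB f with hMdef
  have hX : M * (Matrix.kroneckerMap (· * ·) !![(1:k),1;0,1] !![(1:k),1;0,1])
      = (Matrix.kroneckerMap (· * ·) !![(1:k),1;0,1] !![(1:k),1;0,1]) * M := by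
    have h := congrArg (LinearMap.toMatrix BB BB) hx
    rwa [LinearMap.toMatrix_comp BB BB BB, LinearMap.toMatrix_comp BB BB BB,
      hBBdef, TensorProduct.toMatrix_map, ← hBBdef, hXm] at h
  have hY : M * (Matrix.kroneckerMap (· * ·) !![(1:k),α;0,1] !![(1:k),α;0,1])
      = (Matrix.kroneckerMap (· * ·) !![(1:k),α;0,1] !![(1:k),α;0,1]) * M := by
    have h := congrArg (LinearMap.toMatrix BB BB) hy
    rwa [LinearMap.toMatrix_comp BB BB BB, LinearMap.toMatrix_comp BB BB BB,
      hBBdef, TensorProduct.toMatrix_map, ← hBBdef, hYm] at h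
  rw [← Matrix.ext_iff] at hX hY
  have eX_00_01 := hX (0,0) (0,1)
  have eX_00_10 := hX (0,0) (1,0)
  have eX_00_11 := hX (0,0) (1,1)
  have eX_01_01 := hX (0,1) (0,1)
  have eX_10_01 := hX (1,0) (0,1)
  have eX_10_11 := hX (1,0) (1,1)
  have eY_00_01 := hY (0,0) (0,1)
  have eY_00_10 := hY (0,0) (1,0)
  have eY_00_11 := hY (0,0) (1,1)
  simp [Matrix.mul_apply, Fintype.sum_prod_type, Fin.sum_univ_two]
    at eX_00_01 eX_00_10 eX_00_11 eX_01_01 eX_10_01 eX_10_11 eY_00_01 eY_00_10 eY_00_11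
  have hne : α * (1 - α) ≠ 0 :=
    mul_ne_zero hα0 (sub_ne_zero.mpr fun h => hα1 h.symm)
  have ha3 : M (1,1) (0,1) = 0 := by
    have h : α * (1 - α) * M (1,1) (0,1) = 0 := by
      linear_combination eY_00_01 - α * eX_00_01
    exact (mul_eq_zero.mp h).resolve_left hne
  have hb3 : M (1,1) (1,0) = 0 := by
    have h : α * (1 - α) * M (1,1) (1,0) = 0 := by
      linear_combination eY_00_10 - α * eX_00_10
    exact (mul_eq_zero.mp h).resolve_left hne
  have hd3 : M (1,1) (1,1) = M (0,0) (0,0) := by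
    have h : α * (1 - α) * (M (1,1) (1,1) - M (0,0) (0,0)) = 0 := by
      linear_combination eY_00_11 - α * eX_00_11
    have := (mul_eq_zero.mp h).resolve_left hne
    exact sub_eq_zero.mp this
  have hp01 : M (0,1) (0,0) = 0 := by linear_combination eX_01_01 + ha3
  have hp10 : M (1,0) (0,0) = 0 := by linear_combination eX_10_01 + ha3
  have h1 : M (1,0) (1,0) = M (0,1) (0,1) := by
    linear_combination eX_10_11 + eX_00_01 - hp10 + ha3 + hd3
  have h2 : M (0,1) (0,0) + M (1,1) (1,0) = M (1,0) (0,0) + M (1,1) (0,1) := by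
    linear_combination hp01 + hb3 - hp10 - ha3
  have hf : f = Matrix.toLin BB BB M := by rw [hMdef, Matrix.toLin_toMatrix]
  rw [hf, hBBdef, ptrL, ptrR]
  have h0 : (Pi.single (0:Fin 2) (1:k)) = (Pi.basisFun k (Fin 2)) 0 := by simp
  rw [h0]
  simp only [LinearMap.sum_apply, LinearMap.comp_apply, TensorProduct.mk_apply,
    LinearMap.flip_apply, ← Module.Basis.tensorProduct_apply, Matrix.toLin_self, Fintype.sum_prod_type,
    Fin.sum_univ_two, map_add, map_smul, LinearMap.add_apply]
  simp only [Module.Basis.tensorProduct_apply, TensorProduct.map_tmul, Module.Basis.coord_apply,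
    Module.Basis.repr_self, LinearMap.id_coe, id_eq, TensorProduct.lid_tmul, TensorProduct.rid_tmul,
    Finsupp.single_apply]
  norm_num
  funext x
  fin_cases x <;> simp [Pi.single_apply]
  · linear_combination h1
  · linear_combination h2
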